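/- Let x*, x, y ∈ ℝ^d, θ̂, θ* ∈ ℝ^d, Σ positive definite, and β > 0 with ‖θ̂ − θ*‖_Σ ≤ β. If ‖x* − x‖_{Σ⁻¹} ≤ r, ‖x* − y‖_{Σ⁻¹} ≤ r, ⟨x, θ̂⟩ ≥ ⟨x*, θ̂⟩ − rβ, and ⟨y, θ̂⟩ ≥ ⟨x*, θ̂⟩ − rβ, then 2⟨x*, θ*⟩ − ⟨x + y, θ*⟩ ≤ 4rβ. -/

import Mathlib

open Matrix
lemma cs {d : ℕ} {M : Matrix (Fin d) (Fin d) ℝ} (hM : M.PosDef) (u v : Fin d → ℝ) :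
    u ⬝ᵥ M.mulVec v ≤ Real.sqrt (u ⬝ᵥ M.mulVec u) * Real.sqrt (v ⬝ᵥ M.mulVec v) := by
  have hT : Mᵀ = M := by
    ext i j
    simpa [conjTranspose_apply] using congrFun (congrFun hM.isHermitian.eq i) j
  have hsymm : ∀ a b : Fin d → ℝ, a ⬝ᵥ M.mulVec b = b ⬝ᵥ M.mulVec a := by
    intro a b
    rw [dotProduct_mulVec, ← mulVec_transpose, hT, dotProduct_comm]
  have hnn : ∀ w : Fin d → ℝ, 0 ≤ w ⬝ᵥ M.mulVec w := by
    intro w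
    have := hM.posSemidef.dotProduct_mulVec_nonneg w
    simpa using this
  have hquad : ∀ t : ℝ, 0 ≤ (v ⬝ᵥ M.mulVec v) * (t * t) + (2 * (u ⬝ᵥ M.mulVec v)) * t
      + (u ⬝ᵥ M.mulVec u) := by
    intro t
    have h := hnn (u + t • v)
    have expand : (u + t • v) ⬝ᵥ M.mulVec (u + t • v)
        = (v ⬝ᵥ M.mulVec v) * (t * t) + (2 * (u ⬝ᵥ M.mulVec v)) * t + (u ⬝ᵥ M.mulVec u) := by
      simp only [mulVec_add, mulVec_smul, add_dotProduct, dotProduct_add, smul_dotProduct,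
        dotProduct_smul, smul_eq_mul]
      rw [hsymm v u]; ring
    linarith [expand ▸ h]
  have hd := discrim_le_zero hquad
  rw [discrim] at hd
  have hsq : (u ⬝ᵥ M.mulVec v) ^ 2 ≤ (u ⬝ᵥ M.mulVec u) * (v ⬝ᵥ M.mulVec v) := by nlinarith
  calc u ⬝ᵥ M.mulVec v ≤ |u ⬝ᵥ M.mulVec v| := le_abs_self _
    _ = Real.sqrt ((u ⬝ᵥ M.mulVec v) ^ 2) := (Real.sqrt_sq_eq_abs _).symm
    _ ≤ Real.sqrt ((u ⬝ᵥ M.mulVec u) * (v ⬝ᵥ M.mulVec v)) := Real.sqrt_le_sqrt hsq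
    _ = _ := Real.sqrt_mul (hnn u) _

lemma cs' {d : ℕ} {M : Matrix (Fin d) (Fin d) ℝ} (hM : M.PosDef) (a w : Fin d → ℝ) :
    a ⬝ᵥ w ≤ Real.sqrt (a ⬝ᵥ M⁻¹.mulVec a) * Real.sqrt (w ⬝ᵥ M.mulVec w) := by
  have hdet : IsUnit M.det := isUnit_iff_ne_zero.2 hM.det_pos.ne'
  have hT : Mᵀ = M := by
    ext i j
    simpa [conjTranspose_apply] using congrFun (congrFun hM.isHermitian.eq i) j
  have h := cs hM.inv a (M.mulVec w)
  have e1 : M⁻¹.mulVec (M.mulVec w) = w := by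
    rw [Matrix.mulVec_mulVec, Matrix.nonsing_inv_mul _ hdet, Matrix.one_mulVec]
  rw [e1] at h
  have e2 : M.mulVec w ⬝ᵥ w = w ⬝ᵥ M.mulVec w := by
    rw [dotProduct_comm, dotProduct_mulVec, ← mulVec_transpose, hT]
  rwa [e2] at h

theorem stmt_16 {d : ℕ} (Sig : Matrix (Fin d) (Fin d) ℝ) (hSig : Sig.PosDef)
    (β r : ℝ) (hβ : 0 < β) (hr : 0 < r) (θhat θstar xstar x y : Fin d → ℝ)
    (hconc : Real.sqrt ((θhat - θstar) ⬝ᵥ Sig.mulVec (θhat - θstar)) ≤ β)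
    (hx : Real.sqrt ((xstar - x) ⬝ᵥ Sig⁻¹.mulVec (xstar - x)) ≤ r)
    (hy : Real.sqrt ((xstar - y) ⬝ᵥ Sig⁻¹.mulVec (xstar - y)) ≤ r)
    (hx2 : xstar ⬝ᵥ θhat - r * β ≤ x ⬝ᵥ θhat)
    (hy2 : xstar ⬝ᵥ θhat - r * β ≤ y ⬝ᵥ θhat) :
    2 * (xstar ⬝ᵥ θstar) - (x + y) ⬝ᵥ θstar ≤ 4 * r * β := by
  have bound : ∀ z : Fin d → ℝ,
      Real.sqrt ((xstar - z) ⬝ᵥ Sig⁻¹.mulVec (xstar - z)) ≤ r →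
      xstar ⬝ᵥ θhat - r * β ≤ z ⬝ᵥ θhat →
      xstar ⬝ᵥ θstar - z ⬝ᵥ θstar ≤ 2 * (r * β) := by
    intro z hz hz2
    have h1 := cs' hSig (xstar - z) (θhat - θstar)
    have hmul : Real.sqrt ((xstar - z) ⬝ᵥ Sig⁻¹.mulVec (xstar - z)) *
        Real.sqrt ((θhat - θstar) ⬝ᵥ Sig.mulVec (θhat - θstar)) ≤ r * β :=
      mul_le_mul hz hconc (Real.sqrt_nonneg _) hr.le
    have h2 : (xstar - z) ⬝ᵥ (θhat - θstar) ≤ r * β := h1.trans hmul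
    have h3 : (xstar - z) ⬝ᵥ θhat ≤ r * β := by
      have := hz2
      simp only [sub_dotProduct] at *
      linarith
    have h4 : (xstar - z) ⬝ᵥ θhat - (xstar - z) ⬝ᵥ θstar = (xstar - z) ⬝ᵥ (θhat - θstar) := by
      simp [dotProduct_sub]
    have h5 : (xstar - z) ⬝ᵥ θstar ≤ 2 * (r * β) := by
      have hlow : -(r*β) ≤ (xstar - z) ⬝ᵥ (θhat - θstar) := by
        have h1' := cs' hSig (-(xstar - z)) (θhat - θstar)
        have : (-(xstar - z)) ⬝ᵥ Sig⁻¹.mulVec (-(xstar - z))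
            = (xstar - z) ⬝ᵥ Sig⁻¹.mulVec (xstar - z) := by
          rw [Matrix.mulVec_neg, dotProduct_neg, neg_dotProduct, neg_neg]
        rw [this] at h1'
        have := h1'.trans hmul
        simp only [neg_dotProduct] at this
        linarith
      simp only [sub_dotProduct] at *
      linarith
    simpa [sub_dotProduct] using h5
  have b1 := bound x hx hx2
  have b2 := bound y hy hy2
  simp only [add_dotProduct] at *
  linarith
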